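/- arXiv:2310.12096 — 3 statements merged into one kernel-verified Lean document; each statement's English description precedes it below -/
import Mathlib

section
/- An edge e of a directed weighted graph is vital (i.e., removing e strictly decreases the capacity of the minimum (s,t)-cut) if and only if f(e) > 0 in every maximum (s,t)-flow f. -/
set_option linter.unusedSectionVars false


open Finset

variable {V : Type*} [Fintype V] [DecidableEq V]

/-- capacity of the cut given by the source-side vertex set `C`:
total capacity of edges with tail in `C` and head outside `C`. -/
noncomputable def cutCap (E : Finset (V × V)) (w : V × V → ℝ) (C : Finset V) : ℝ :=
  ∑ e ∈ E.filter (fun e => e.1 ∈ C ∧ e.2 ∉ C), w e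

/-- `C` is an (s,t)-cut. -/
def IsCut (s t : V) (C : Finset V) : Prop := s ∈ C ∧ t ∉ C

/-- edge `e` is a contributing (outgoing) edge of the cut `C`. -/
def Contributes (e : V × V) (C : Finset V) : Prop := e.1 ∈ C ∧ e.2 ∉ C

/-- `f` is a feasible (s,t)-flow on edge set `E` with capacities `w`. -/
structure IsFlow (E : Finset (V × V)) (w : V × V → ℝ) (s t : V) (f : V × V → ℝ) : Prop where
  nonneg : ∀ e ∈ E, 0 ≤ f e
  le_cap : ∀ e ∈ E, f e ≤ w e
  support : ∀ e, e ∉ E → f e = 0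
  conserve : ∀ v, v ≠ s → v ≠ t →
    ∑ e ∈ E.filter (fun e => e.1 = v), f e = ∑ e ∈ E.filter (fun e => e.2 = v), f e

/-- value of an (s,t)-flow: the net flow out of `s`. -/
noncomputable def flowValue (E : Finset (V × V)) (s : V) (f : V × V → ℝ) : ℝ :=
  ∑ e ∈ E.filter (fun e => e.1 = s), f e - ∑ e ∈ E.filter (fun e => e.2 = s), f e

/-- `f` is a maximum (s,t)-flow. -/
def IsMaxFlow (E : Finset (V × V)) (w : V × V → ℝ) (s t : V) (f : V × V → ℝ) : Prop :=
  IsFlow E w s t f ∧ ∀ g, IsFlow E w s t g → flowValue E s g ≤ flowValue E s f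

/-- capacity of a minimum (s,t)-cut. -/
noncomputable def minCutCap (E : Finset (V × V)) (w : V × V → ℝ) (s t : V) : ℝ :=
  sInf {x | ∃ C : Finset V, IsCut s t C ∧ cutCap E w C = x}

/-- `e` is a vital edge: deleting it strictly decreases the min (s,t)-cut capacity. -/
def Vital (E : Finset (V × V)) (w : V × V → ℝ) (s t : V) (e : V × V) : Prop :=
  e ∈ E ∧ minCutCap (E.erase e) w s t < minCutCap E w s t

/-- `C` is a mincut for the edge `e`: a least-capacity (s,t)-cut in which `e` contributes. -/
def IsMincutFor (E : Finset (V × V)) (w : V × V → ℝ) (s t : V) (e : V × V)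
    (C : Finset V) : Prop :=
  IsCut s t C ∧ Contributes e C ∧
    ∀ C', IsCut s t C' → Contributes e C' → cutCap E w C ≤ cutCap E w C'

/-- total flow on edges leaving the cut `C`. -/
noncomputable def flowOut (E : Finset (V × V)) (f : V × V → ℝ) (C : Finset V) : ℝ :=
  ∑ e ∈ E.filter (fun e => e.1 ∈ C ∧ e.2 ∉ C), f e

/-- total flow on edges entering the cut `C`. -/
noncomputable def flowIn (E : Finset (V × V)) (f : V × V → ℝ) (C : Finset V) : ℝ :=
  ∑ e ∈ E.filter (fun e => e.1 ∉ C ∧ e.2 ∈ C), f e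

/-- net divergence of `h` at vertex `v`. -/
noncomputable def fdiv (E : Finset (V × V)) (h : V × V → ℝ) (v : V) : ℝ :=
  ∑ e ∈ E.filter (fun e => e.1 = v), h e - ∑ e ∈ E.filter (fun e => e.2 = v), h e

lemma sum_bump (S : Finset (V × V)) (h : V × V → ℝ) (a : V × V) (μ : ℝ) :
    ∑ e ∈ S, (if e = a then h e + μ else h e) = (∑ e ∈ S, h e) + (if a ∈ S then μ else 0) := by
  have : ∀ e, (if e = a then h e + μ else h e) = h e + (if e = a then μ else 0) := by
    intro e; split_ifs <;> simp
  rw [Finset.sum_congr rfl (fun e _ => this e), Finset.sum_add_distrib,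
    Finset.sum_ite_eq' S a (fun _ => μ)]

lemma fdiv_update (E : Finset (V × V)) (h : V × V → ℝ) (a : V × V) (ha : a ∈ E) (μ : ℝ) (v : V) :
    fdiv E (fun b => if b = a then h b + μ else h b) v
      = fdiv E h v + (if a.1 = v then μ else 0) - (if a.2 = v then μ else 0) := by
  unfold fdiv
  rw [sum_bump, sum_bump]
  simp only [Finset.mem_filter, ha, true_and]
  ring

lemma sum_fdiv (E : Finset (V × V)) (h : V × V → ℝ) (C : Finset V) :
    ∑ v ∈ C, fdiv E h v = flowOut E h C - flowIn E h C := by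
  unfold fdiv flowOut flowIn
  rw [Finset.sum_sub_distrib]
  have key : ∀ (p : V × V → V), ∑ v ∈ C, ∑ e ∈ E.filter (fun e => p e = v), h e
      = ∑ e ∈ E, (if p e ∈ C then h e else 0) := by
    intro p
    have : ∀ v, ∑ e ∈ E.filter (fun e => p e = v), h e = ∑ e ∈ E, (if p e = v then h e else 0) :=
      fun v => Finset.sum_filter _ _
    rw [Finset.sum_congr rfl (fun v _ => this v), Finset.sum_comm]
    refine Finset.sum_congr rfl fun e _ => ?_
    exact Finset.sum_ite_eq C (p e) (fun _ => h e)
  rw [key (fun e => e.1), key (fun e => e.2), Finset.sum_filter, Finset.sum_filter,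
    ← Finset.sum_sub_distrib, ← Finset.sum_sub_distrib]
  refine Finset.sum_congr rfl fun e _ => ?_
  by_cases h1 : e.1 ∈ C <;> by_cases h2 : e.2 ∈ C <;> simp [h1, h2]

variable {E : Finset (V × V)} {w : V × V → ℝ} {s t : V} {f : V × V → ℝ} {C : Finset V}

lemma flowValue_eq_fdiv : flowValue E s f = fdiv E f s := rfl

lemma flowValue_eq_cut (hf : IsFlow E w s t f) (hC : IsCut s t C) :
    flowValue E s f = flowOut E f C - flowIn E f C := by
  have hz : ∀ v ∈ C.erase s, fdiv E f v = 0 := by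
    intro v hv
    obtain ⟨hvs, hvC⟩ := Finset.mem_erase.mp hv
    have hvt : v ≠ t := fun h => hC.2 (h ▸ hvC)
    exact sub_eq_zero.mpr (hf.conserve v hvs hvt)
  have hsum := sum_fdiv E f C
  rw [← Finset.add_sum_erase C _ hC.1, Finset.sum_eq_zero hz, add_zero] at hsum
  rw [flowValue_eq_fdiv, hsum]

lemma flowValue_le_cutCap (hf : IsFlow E w s t f) (hC : IsCut s t C) :
    flowValue E s f ≤ cutCap E w C := by
  rw [flowValue_eq_cut hf hC]
  have h1 : flowOut E f C ≤ cutCap E w C :=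
    Finset.sum_le_sum fun a ha => hf.le_cap a (Finset.mem_filter.mp ha).1
  have h2 : 0 ≤ flowIn E f C :=
    Finset.sum_nonneg fun a ha => hf.nonneg a (Finset.mem_filter.mp ha).1
  linarith

lemma minCutCap_le (hC : IsCut s t C) : minCutCap E w s t ≤ cutCap E w C := by
  apply csInf_le
  · have hsub : {x | ∃ C : Finset V, IsCut s t C ∧ cutCap E w C = x} ⊆
        Set.range (cutCap E w) := by rintro x ⟨C, _, rfl⟩; exact ⟨C, rfl⟩
    exact ((Set.finite_range (cutCap E w)).subset hsub).bddBelow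
  · exact ⟨C, hC, rfl⟩

lemma le_minCutCap (hst : s ≠ t) {x : ℝ} (h : ∀ C, IsCut s t C → x ≤ cutCap E w C) :
    x ≤ minCutCap E w s t := by
  refine le_csInf ⟨cutCap E w (Finset.univ.erase t), Finset.univ.erase t,
    ⟨Finset.mem_erase.mpr ⟨hst, Finset.mem_univ s⟩, Finset.notMem_erase t _⟩, rfl⟩ ?_
  rintro y ⟨C, hC, rfl⟩
  exact h C hC

lemma flowValue_le_minCutCap (hst : s ≠ t) (hf : IsFlow E w s t f) :
    flowValue E s f ≤ minCutCap E w s t :=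
  le_minCutCap hst fun C hC => flowValue_le_cutCap hf hC

/-- `AugTo f x`: for every `ε > 0` we can reroute a small positive amount `δ ≤ ε`
of flow from `s` to `x`, staying within capacities and `ε`-close to `f`. -/
def AugTo (E : Finset (V × V)) (w : V × V → ℝ) (s : V) (f : V × V → ℝ) (x : V) : Prop :=
  ∀ ε : ℝ, 0 < ε → ∃ h : V × V → ℝ, ∃ δ : ℝ, 0 < δ ∧ δ ≤ ε ∧
    (∀ a ∈ E, 0 ≤ h a) ∧ (∀ a ∈ E, h a ≤ w a) ∧ (∀ a, a ∉ E → h a = 0) ∧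
    (∀ a, |h a - f a| ≤ ε) ∧
    (∀ v, v ≠ s → v ≠ x → fdiv E h v = fdiv E f v) ∧
    fdiv E h s = fdiv E f s + δ ∧ fdiv E h x = fdiv E f x - δ

lemma aug_extend (hfl : IsFlow E w s t f) {x y : V} (hy : y ≠ s)
    (hxy : ((x, y) ∈ E ∧ f (x, y) < w (x, y)) ∨ ((y, x) ∈ E ∧ 0 < f (y, x)))
    (hx : x = s ∨ AugTo E w s f x) : AugTo E w s f y := by
  by_cases hxye : x = y
  · subst hxye
    exact hx.resolve_left (fun h => hy h)
  by_cases hxs : x = s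
  · rw [hxs] at hxy
    intro ε hε
    rcases hxy with ⟨haE, hres⟩ | ⟨haE, hres⟩
    · -- forward edge (s, y)
      set δ := min ε (w (s, y) - f (s, y)) with hδdef
      have hδ0 : 0 < δ := lt_min hε (sub_pos.mpr hres)
      refine ⟨fun b => if b = (s, y) then f b + δ else f b, δ, hδ0, min_le_left _ _,
        ?_, ?_, ?_, ?_, ?_, ?_, ?_⟩
      · intro a ha; dsimp only; split_ifs with h'
        · exact add_nonneg (hfl.nonneg a ha) hδ0.le
        · exact hfl.nonneg a ha
      · intro a ha; dsimp only; split_ifs with h'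
        · subst h'; have := min_le_right ε (w (s, y) - f (s, y)); linarith
        · exact hfl.le_cap a ha
      · intro a ha; dsimp only
        rw [if_neg (fun h' => ha (by rw [h']; exact haE)), hfl.support a ha]
      · intro a; dsimp only; split_ifs with h'
        · have h2 : f a + δ - f a = δ := by ring
          rw [h2, abs_of_pos hδ0]; exact min_le_left _ _
        · simpa using hε.le
      · intro v hvs hvy
        rw [fdiv_update E f (s, y) haE δ v]
        simp [Ne.symm hvs, Ne.symm hvy]
      · rw [fdiv_update E f (s, y) haE δ s]
        simp [hy, Ne.symm hy]
      · rw [fdiv_update E f (s, y) haE δ y]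
        simp [hy, Ne.symm hy]
    · -- backward edge (y, s)
      set δ := min ε (f (y, s)) with hδdef
      have hδ0 : 0 < δ := lt_min hε hres
      have hδf : δ ≤ f (y, s) := min_le_right _ _
      refine ⟨fun b => if b = (y, s) then f b + (-δ) else f b, δ, hδ0, min_le_left _ _,
        ?_, ?_, ?_, ?_, ?_, ?_, ?_⟩
      · intro a ha; dsimp only; split_ifs with h'
        · subst h'; linarith
        · exact hfl.nonneg a ha
      · intro a ha; dsimp only; split_ifs with h'
        · have := hfl.le_cap a ha; linarith
        · exact hfl.le_cap a ha
      · intro a ha; dsimp only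
        rw [if_neg (fun h' => ha (by rw [h']; exact haE)), hfl.support a ha]
      · intro a; dsimp only; split_ifs with h'
        · have h2 : f a + -δ - f a = -δ := by ring
          rw [h2, abs_neg, abs_of_pos hδ0]; exact min_le_left _ _
        · simpa using hε.le
      · intro v hvs hvy
        rw [fdiv_update E f (y, s) haE (-δ) v]
        simp [Ne.symm hvs, Ne.symm hvy]
      · rw [fdiv_update E f (y, s) haE (-δ) s]
        simp [hy, Ne.symm hy]
      · rw [fdiv_update E f (y, s) haE (-δ) y]
        simp [hy, Ne.symm hy]
        ring
  · -- x ≠ s : use the inductive hypothesis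
    obtain IH := hx.resolve_left hxs
    intro ε hε
    rcases hxy with ⟨haE, hres⟩ | ⟨haE, hres⟩
    · -- forward edge (x, y)
      set r := w (x, y) - f (x, y) with hrdef
      have hr : 0 < r := sub_pos.mpr hres
      have hε' : 0 < min (ε / 2) (r / 2) := lt_min (by linarith) (by linarith)
      obtain ⟨h, δ, hδ0, hδε, hh0, hhw, hhsupp, hhnear, hhcons, hhs, hhx⟩ :=
        IH (min (ε / 2) (r / 2)) hε'
      have hδε2 : δ ≤ ε / 2 := hδε.trans (min_le_left _ _)
      have hδr : δ ≤ r / 2 := hδε.trans (min_le_right _ _)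
      have hnear : |h (x, y) - f (x, y)| ≤ min (ε / 2) (r / 2) := hhnear (x, y)
      have hnear1 : h (x, y) - f (x, y) ≤ r / 2 := (abs_le.mp hnear).2.trans (min_le_right _ _)
      refine ⟨fun b => if b = (x, y) then h b + δ else h b, δ, hδ0, by linarith, ?_, ?_, ?_, ?_, ?_, ?_, ?_⟩
      · intro a ha; dsimp only; split_ifs with h'
        · exact add_nonneg (hh0 a ha) hδ0.le
        · exact hh0 a ha
      · intro a ha; dsimp only; split_ifs with h'
        · subst h'; linarith
        · exact hhw a ha
      · intro a ha; dsimp only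
        rw [if_neg (fun h' => ha (by rw [h']; exact haE)), hhsupp a ha]
      · intro a; dsimp only
        have := abs_le.mp (hhnear a)
        have h2 : min (ε / 2) (r / 2) ≤ ε / 2 := min_le_left _ _
        split_ifs with h' <;> rw [abs_le] <;> constructor <;> linarith [this.1, this.2]
      · intro v hvs hvy
        rw [fdiv_update E h (x, y) haE δ v]
        by_cases hvx : v = x
        · subst hvx; simp [Ne.symm hvy, hhx]
        · have hxv : ¬ x = v := fun h' => hvx h'.symm
          simp [Ne.symm hvy, hxv, hhcons v hvs (fun h' => hvx h')]
      · rw [fdiv_update E h (x, y) haE δ s]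
        simp [hy, Ne.symm hy, hxs, hhs]
      · rw [fdiv_update E h (x, y) haE δ y]
        simp [hxye, hhcons y hy (fun h' => hxye h'.symm)]
    · -- backward edge (y, x)
      set r := f (y, x) with hrdef
      have hε' : 0 < min (ε / 2) (r / 2) := lt_min (by linarith) (by linarith)
      obtain ⟨h, δ, hδ0, hδε, hh0, hhw, hhsupp, hhnear, hhcons, hhs, hhx⟩ :=
        IH (min (ε / 2) (r / 2)) hε'
      have hδε2 : δ ≤ ε / 2 := hδε.trans (min_le_left _ _)
      have hδr : δ ≤ r / 2 := hδε.trans (min_le_right _ _)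
      have hnear : |h (y, x) - f (y, x)| ≤ min (ε / 2) (r / 2) := hhnear (y, x)
      have hnear1 : f (y, x) - h (y, x) ≤ r / 2 := by
        have := (abs_le.mp hnear).1
        have h2 : min (ε / 2) (r / 2) ≤ r / 2 := min_le_right _ _
        linarith
      refine ⟨fun b => if b = (y, x) then h b + (-δ) else h b, δ, hδ0, by linarith, ?_, ?_, ?_, ?_, ?_, ?_, ?_⟩
      · intro a ha; dsimp only; split_ifs with h'
        · subst h'; linarith
        · exact hh0 a ha
      · intro a ha; dsimp only; split_ifs with h'
        · have := hhw a ha; linarith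
        · exact hhw a ha
      · intro a ha; dsimp only
        rw [if_neg (fun h' => ha (by rw [h']; exact haE)), hhsupp a ha]
      · intro a; dsimp only
        have := abs_le.mp (hhnear a)
        have h2 : min (ε / 2) (r / 2) ≤ ε / 2 := min_le_left _ _
        split_ifs with h' <;> rw [abs_le] <;> constructor <;> linarith [this.1, this.2]
      · intro v hvs hvy
        rw [fdiv_update E h (y, x) haE (-δ) v]
        by_cases hvx : v = x
        · subst hvx; simp [Ne.symm hvy, hhx]
        · have hxv : ¬ x = v := fun h' => hvx h'.symm
          simp [Ne.symm hvy, hxv, hhcons v hvs (fun h' => hvx h')]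
      · rw [fdiv_update E h (y, x) haE (-δ) s]
        simp [hy, Ne.symm hy, hxs, hhs]
      · rw [fdiv_update E h (y, x) haE (-δ) y]
        simp [hxye, hhcons y hy (fun h' => hxye h'.symm)]
        ring

lemma isMaxFlow_no_aug (hst : s ≠ t) (hf : IsMaxFlow E w s t f) :
    ¬ Relation.ReflTransGen
      (fun u v => ((u, v) ∈ E ∧ f (u, v) < w (u, v)) ∨ ((v, u) ∈ E ∧ 0 < f (v, u))) s t := by
  intro hr
  have key : ∀ z, Relation.ReflTransGen
      (fun u v => ((u, v) ∈ E ∧ f (u, v) < w (u, v)) ∨ ((v, u) ∈ E ∧ 0 < f (v, u))) s z →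
      z = s ∨ AugTo E w s f z := by
    intro z hz
    induction hz with
    | refl => exact Or.inl rfl
    | @tail b c _ hbc ih =>
      by_cases hcs : c = s
      · exact Or.inl hcs
      · exact Or.inr (aug_extend hf.1 hcs hbc ih)
  obtain haug := (key t hr).resolve_left (fun h => hst h.symm)
  obtain ⟨h, δ, hδ0, _, h0, hw', hsupp, _, hcons, hs, _⟩ := haug 1 one_pos
  have hIsFlow : IsFlow E w s t h := by
    refine ⟨h0, hw', hsupp, ?_⟩
    intro v hv1 hv2
    have h1 := hcons v hv1 hv2
    have h2 := hf.1.conserve v hv1 hv2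
    unfold fdiv at h1
    linarith
  have hle : flowValue E s h ≤ flowValue E s f := hf.2 h hIsFlow
  have heq : flowValue E s h = flowValue E s f + δ := hs
  linarith

lemma IsMaxFlow.value_eq (hst : s ≠ t) (hf : IsMaxFlow E w s t f) :
    flowValue E s f = minCutCap E w s t := by
  classical
  have hnr := isMaxFlow_no_aug hst hf
  set R : V → V → Prop :=
    fun u v => ((u, v) ∈ E ∧ f (u, v) < w (u, v)) ∨ ((v, u) ∈ E ∧ 0 < f (v, u)) with hR
  set C : Finset V := Finset.univ.filter (fun v => Relation.ReflTransGen R s v) with hCdef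
  have hmemC : ∀ v, v ∈ C ↔ Relation.ReflTransGen R s v := by
    intro v; simp [hCdef]
  have hC : IsCut s t C := ⟨(hmemC s).mpr Relation.ReflTransGen.refl,
    fun h => hnr ((hmemC t).mp h)⟩
  have hval : flowValue E s f = cutCap E w C := by
    rw [flowValue_eq_cut hf.1 hC]
    have hout : flowOut E f C = cutCap E w C := by
      refine Finset.sum_congr rfl fun a ha => ?_
      obtain ⟨haE, ha1, ha2⟩ := Finset.mem_filter.mp ha
      by_contra hne
      have hlt : f a < w a := lt_of_le_of_ne (hf.1.le_cap a haE) hne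
      have hRa : R a.1 a.2 := Or.inl ⟨by rwa [Prod.mk.eta], by rwa [Prod.mk.eta]⟩

      exact ha2 ((hmemC a.2).mpr (((hmemC a.1).mp ha1).tail hRa))
    have hin : flowIn E f C = 0 := by
      refine Finset.sum_eq_zero fun a ha => ?_
      obtain ⟨haE, hmem⟩ := Finset.mem_filter.mp ha
      by_contra hne
      have hlt : 0 < f a := lt_of_le_of_ne (hf.1.nonneg a haE) (Ne.symm hne)
      have hRa : R a.2 a.1 := Or.inr ⟨by rwa [Prod.mk.eta], by rwa [Prod.mk.eta]⟩
      exact hmem.1 ((hmemC a.1).mpr (((hmemC a.2).mp hmem.2).tail hRa))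
    rw [hout, hin, sub_zero]
  exact le_antisymm (flowValue_le_minCutCap hst hf.1) (hval ▸ minCutCap_le hC)

lemma exists_isMaxFlow (E : Finset (V × V)) (w : V × V → ℝ) (s t : V)
    (hw : ∀ a ∈ E, 0 ≤ w a) : ∃ f, IsMaxFlow E w s t f := by
  classical
  set F : Set (V × V → ℝ) := {f | IsFlow E w s t f} with hF
  have hne : F.Nonempty := by
    refine ⟨fun _ => 0, ?_, ?_, ?_, ?_⟩
    · intro a _; exact le_refl 0
    · intro a ha; exact hw a ha
    · intro a _; rfl
    · intro v _ _; simp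
  have hclosed : IsClosed F := by
    have h1 : IsClosed {f : V × V → ℝ | ∀ a, a ∈ E → 0 ≤ f a} := by
      have he : {f : V × V → ℝ | ∀ a, a ∈ E → 0 ≤ f a}
          = ⋂ (a : V × V) (_ : a ∈ E), {f : V × V → ℝ | 0 ≤ f a} := by
        ext f; simp
      rw [he]
      exact isClosed_iInter fun a => isClosed_iInter fun _ =>
        isClosed_le continuous_const (continuous_apply a)
    have h2 : IsClosed {f : V × V → ℝ | ∀ a, a ∈ E → f a ≤ w a} := by
      have he : {f : V × V → ℝ | ∀ a, a ∈ E → f a ≤ w a}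
          = ⋂ (a : V × V) (_ : a ∈ E), {f : V × V → ℝ | f a ≤ w a} := by
        ext f; simp
      rw [he]
      exact isClosed_iInter fun a => isClosed_iInter fun _ =>
        isClosed_le (continuous_apply a) continuous_const
    have h3 : IsClosed {f : V × V → ℝ | ∀ a, a ∉ E → f a = 0} := by
      have he : {f : V × V → ℝ | ∀ a, a ∉ E → f a = 0}
          = ⋂ (a : V × V) (_ : a ∉ E), {f : V × V → ℝ | f a = 0} := by
        ext f; simp
      rw [he]
      exact isClosed_iInter fun a => isClosed_iInter fun _ =>
        isClosed_eq (continuous_apply a) continuous_const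
    have h4 : IsClosed {f : V × V → ℝ | ∀ v, v ≠ s → v ≠ t →
        ∑ e ∈ E.filter (fun e => e.1 = v), f e = ∑ e ∈ E.filter (fun e => e.2 = v), f e} := by
      have he : {f : V × V → ℝ | ∀ v, v ≠ s → v ≠ t →
          ∑ e ∈ E.filter (fun e => e.1 = v), f e = ∑ e ∈ E.filter (fun e => e.2 = v), f e}
          = ⋂ (v : V) (_ : v ≠ s) (_ : v ≠ t), {f : V × V → ℝ |
            ∑ e ∈ E.filter (fun e => e.1 = v), f e = ∑ e ∈ E.filter (fun e => e.2 = v), f e} := by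
        ext f; simp
      rw [he]
      exact isClosed_iInter fun v => isClosed_iInter fun _ => isClosed_iInter fun _ =>
        isClosed_eq (continuous_finset_sum _ fun e _ => continuous_apply e)
          (continuous_finset_sum _ fun e _ => continuous_apply e)
    have hFeq : F = {f : V × V → ℝ | ∀ a, a ∈ E → 0 ≤ f a} ∩
        {f | ∀ a, a ∈ E → f a ≤ w a} ∩ {f | ∀ a, a ∉ E → f a = 0} ∩
        {f | ∀ v, v ≠ s → v ≠ t →
          ∑ e ∈ E.filter (fun e => e.1 = v), f e = ∑ e ∈ E.filter (fun e => e.2 = v), f e} := by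
      ext f
      constructor
      · rintro ⟨p1, p2, p3, p4⟩; exact ⟨⟨⟨p1, p2⟩, p3⟩, p4⟩
      · rintro ⟨⟨⟨p1, p2⟩, p3⟩, p4⟩; exact ⟨p1, p2, p3, p4⟩
    rw [hFeq]
    exact ((h1.inter h2).inter h3).inter h4
  have hsub : F ⊆ Set.univ.pi fun a : V × V => Set.Icc (0 : ℝ) (max (w a) 0) := by
    intro f hf a _
    by_cases ha : a ∈ E
    · exact ⟨hf.nonneg a ha, (hf.le_cap a ha).trans (le_max_left _ _)⟩
    · rw [hf.support a ha]; exact ⟨le_refl 0, le_max_right _ _⟩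
  have hK : IsCompact (Set.univ.pi fun a : V × V => Set.Icc (0 : ℝ) (max (w a) 0)) :=
    isCompact_univ_pi fun a => isCompact_Icc
  have hcomp : IsCompact F := hK.of_isClosed_subset hclosed hsub
  have hcont : Continuous (fun f : V × V → ℝ => flowValue E s f) := by
    unfold flowValue
    exact (continuous_finset_sum _ fun e _ => continuous_apply e).sub
      (continuous_finset_sum _ fun e _ => continuous_apply e)
  obtain ⟨f, hfF, hmax⟩ := hcomp.exists_isMaxOn hne hcont.continuousOn
  exact ⟨f, hfF, fun g hg => hmax hg⟩

lemma sum_filter_erase_eq {e : V × V} {g : V × V → ℝ} (hge : g e = 0)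
    (p : V × V → Prop) [DecidablePred p] :
    ∑ a ∈ (E.erase e).filter p, g a = ∑ a ∈ E.filter p, g a := by
  rw [Finset.filter_erase, Finset.sum_erase _ hge]

lemma isFlow_erase_of {e : V × V} (hf : IsFlow E w s t f) (hfe : f e = 0) :
    IsFlow (E.erase e) w s t f := by
  refine ⟨fun a ha => hf.nonneg a (Finset.mem_of_mem_erase ha),
    fun a ha => hf.le_cap a (Finset.mem_of_mem_erase ha), ?_, ?_⟩
  · intro a ha
    by_cases hae : a = e
    · rw [hae]; exact hfe
    · exact hf.support a (fun h => ha (Finset.mem_erase.mpr ⟨hae, h⟩))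
  · intro v hv1 hv2
    rw [sum_filter_erase_eq hfe, sum_filter_erase_eq hfe]
    exact hf.conserve v hv1 hv2

lemma flowValue_erase {e : V × V} {g : V × V → ℝ} (hge : g e = 0) :
    flowValue (E.erase e) s g = flowValue E s g := by
  unfold flowValue
  rw [sum_filter_erase_eq hge, sum_filter_erase_eq hge]

lemma isFlow_of_erase {e : V × V} {g : V × V → ℝ} (hg : IsFlow (E.erase e) w s t g)
    (hwe : 0 ≤ w e) : IsFlow E w s t g := by
  have hge : g e = 0 := hg.support e (Finset.notMem_erase e E)
  refine ⟨?_, ?_, ?_, ?_⟩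
  · intro a ha
    by_cases hae : a = e
    · rw [hae, hge]
    · exact hg.nonneg a (Finset.mem_erase.mpr ⟨hae, ha⟩)
  · intro a ha
    by_cases hae : a = e
    · rw [hae, hge]; exact hwe
    · exact hg.le_cap a (Finset.mem_erase.mpr ⟨hae, ha⟩)
  · intro a ha; exact hg.support a (fun h => ha (Finset.mem_of_mem_erase h))
  · intro v hv1 hv2
    rw [← sum_filter_erase_eq hge (fun e => e.1 = v), ← sum_filter_erase_eq hge (fun e => e.2 = v)]
    exact hg.conserve v hv1 hv2

lemma minCutCap_erase_le {e : V × V} (hst : s ≠ t) (hw : ∀ a ∈ E, 0 ≤ w a) :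
    minCutCap (E.erase e) w s t ≤ minCutCap E w s t := by
  refine le_csInf ⟨cutCap E w (Finset.univ.erase t), Finset.univ.erase t,
    ⟨Finset.mem_erase.mpr ⟨hst, Finset.mem_univ s⟩, Finset.notMem_erase t _⟩, rfl⟩ ?_
  rintro y ⟨C, hC, rfl⟩
  refine (minCutCap_le hC).trans ?_
  refine Finset.sum_le_sum_of_subset_of_nonneg
    (Finset.filter_subset_filter _ (Finset.erase_subset e E)) fun a ha _ => ?_
  exact hw a (Finset.mem_filter.mp ha).1

theorem vital_iff_pos_in_every_maxflow (E : Finset (V × V)) (w : V × V → ℝ) (s t : V)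
    (hst : s ≠ t) (hpos : ∀ e ∈ E, 0 < w e) (e : V × V) (he : e ∈ E) :
    Vital E w s t e ↔ ∀ f, IsMaxFlow E w s t f → 0 < f e := by
  unfold Vital
  have hw : ∀ a ∈ E, 0 ≤ w a := fun a ha => (hpos a ha).le
  constructor
  · rintro ⟨_, hlt⟩ f hf
    rcases lt_or_eq_of_le (hf.1.nonneg e he) with h | h
    · exact h
    have hfe : f e = 0 := h.symm
    have hflow' : IsFlow (E.erase e) w s t f := isFlow_erase_of hf.1 hfe
    have h1 : flowValue (E.erase e) s f ≤ minCutCap (E.erase e) w s t :=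
      flowValue_le_minCutCap hst hflow'
    have h2 : flowValue E s f = minCutCap E w s t := hf.value_eq hst
    rw [flowValue_erase hfe] at h1
    linarith
  · intro hall
    refine ⟨he, ?_⟩
    by_contra hnlt
    push_neg at hnlt
    have heq : minCutCap (E.erase e) w s t = minCutCap E w s t :=
      le_antisymm (minCutCap_erase_le hst hw) hnlt
    obtain ⟨g, hg⟩ := exists_isMaxFlow (E.erase e) w s t
      (fun a ha => hw a (Finset.mem_of_mem_erase ha))
    have hge : g e = 0 := hg.1.support e (Finset.notMem_erase e E)
    have hgE : IsFlow E w s t g := isFlow_of_erase hg.1 (hw e he)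
    have hval : flowValue E s g = minCutCap E w s t := by
      rw [← flowValue_erase hge, hg.value_eq hst, heq]
    have hgmax : IsMaxFlow E w s t g := by
      refine ⟨hgE, fun h hh => ?_⟩
      rw [hval]
      exact flowValue_le_minCutCap hst hh
    have := hall g hgmax
    rw [hge] at this
    exact lt_irrefl 0 this
end

section
/- Conversely, if C is an (s,t)-cut with vital edge e as a contributing edge, and there exists a maximum (s,t)-flow f such that all incoming edges of C carry zero flow and every contributing edge of C other than e is fully saturated while e carries w_min(e) flow, then C is a mincut for e, i.e., C has least capacity among all (s,t)-cuts in which e contributes. -/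
open Finset

variable {V : Type*} [Fintype V] [DecidableEq V]

lemma flowValue_eq_flowOut_sub_flowIn (E : Finset (V × V)) (w : V × V → ℝ) (s t : V)
    (f : V × V → ℝ) (hf : IsFlow E w s t f) (C : Finset V) (hC : IsCut s t C) :
    flowValue E s f = flowOut E f C - flowIn E f C := by
  have key : ∑ v ∈ C, ((∑ e ∈ E.filter (fun e => e.1 = v), f e)
      - ∑ e ∈ E.filter (fun e => e.2 = v), f e) = flowValue E s f := by
    rw [Finset.sum_eq_single_of_mem s hC.1]
    · rfl
    · intro v hv hvs
      have hvt : v ≠ t := fun h => hC.2 (h ▸ hv)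
      rw [hf.conserve v hvs hvt, sub_self]
  rw [Finset.sum_sub_distrib] at key
  have h1 : ∑ v ∈ C, ∑ e ∈ E.filter (fun e => e.1 = v), f e
      = ∑ e ∈ E.filter (fun e => e.1 ∈ C), f e := by
    rw [← Finset.sum_fiberwise_of_maps_to (g := Prod.fst)
      (fun e he => (Finset.mem_filter.mp he).2)]
    refine Finset.sum_congr rfl fun v hv => ?_
    rw [Finset.filter_filter]
    refine Finset.sum_congr (Finset.filter_congr fun e _ => ?_) fun _ _ => rfl
    constructor
    · intro h; exact ⟨h ▸ hv, h⟩
    · exact fun h => h.2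
  have h2 : ∑ v ∈ C, ∑ e ∈ E.filter (fun e => e.2 = v), f e
      = ∑ e ∈ E.filter (fun e => e.2 ∈ C), f e := by
    rw [← Finset.sum_fiberwise_of_maps_to (g := Prod.snd)
      (fun e he => (Finset.mem_filter.mp he).2)]
    refine Finset.sum_congr rfl fun v hv => ?_
    rw [Finset.filter_filter]
    refine Finset.sum_congr (Finset.filter_congr fun e _ => ?_) fun _ _ => rfl
    constructor
    · intro h; exact ⟨h ▸ hv, h⟩
    · exact fun h => h.2
  rw [h1, h2] at key
  have h3 : ∑ e ∈ E.filter (fun e => e.1 ∈ C), f e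
      = (∑ e ∈ (E.filter (fun e => e.1 ∈ C)).filter (fun e => e.2 ∈ C), f e)
        + ∑ e ∈ (E.filter (fun e => e.1 ∈ C)).filter (fun e => e.2 ∉ C), f e :=
    (Finset.sum_filter_add_sum_filter_not _ _ _).symm
  have h4 : ∑ e ∈ E.filter (fun e => e.2 ∈ C), f e
      = (∑ e ∈ (E.filter (fun e => e.2 ∈ C)).filter (fun e => e.1 ∈ C), f e)
        + ∑ e ∈ (E.filter (fun e => e.2 ∈ C)).filter (fun e => e.1 ∉ C), f e :=
    (Finset.sum_filter_add_sum_filter_not _ _ _).symm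
  have h5 : (E.filter (fun e => e.1 ∈ C)).filter (fun e => e.2 ∈ C)
      = (E.filter (fun e => e.2 ∈ C)).filter (fun e => e.1 ∈ C) := by
    rw [Finset.filter_filter, Finset.filter_filter]
    exact Finset.filter_congr fun e _ => and_comm
  rw [h3, h4, h5] at key
  have h6 : (E.filter (fun e => e.1 ∈ C)).filter (fun e => e.2 ∉ C)
      = E.filter (fun e => e.1 ∈ C ∧ e.2 ∉ C) := by rw [Finset.filter_filter]
  have h7 : (E.filter (fun e => e.2 ∈ C)).filter (fun e => e.1 ∉ C)
      = E.filter (fun e => e.1 ∉ C ∧ e.2 ∈ C) := by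
    rw [Finset.filter_filter]; exact Finset.filter_congr fun e _ => and_comm
  rw [h6, h7] at key
  rw [← key, flowOut, flowIn]
  ring

/-- GenFlowCut, converse direction. -/
theorem genFlowCut_converse (E : Finset (V × V)) (w : V × V → ℝ) (s t : V)
    (hst : s ≠ t) (hpos : ∀ e ∈ E, 0 < w e) (e : V × V)
    (hvit : Vital E w s t e) (C : Finset V)
    (hCcut : IsCut s t C) (hcontrib : Contributes e C)
    (hf : ∃ f, IsMaxFlow E w s t f ∧
      (∀ e' ∈ E, e'.1 ∉ C → e'.2 ∈ C → f e' = 0) ∧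
      f e = minCutCap E w s t - minCutCap (E.erase e) w s t ∧
      (∀ e' ∈ E, e' ≠ e → Contributes e' C → f e' = w e')) :
    IsMincutFor E w s t e C := by
  obtain ⟨f, ⟨hflow, _⟩, hin0, hfe, hsat⟩ := hf
  obtain ⟨heE, _⟩ := hvit
  have heC : e ∈ E.filter (fun e' => e'.1 ∈ C ∧ e'.2 ∉ C) :=
    Finset.mem_filter.mpr ⟨heE, hcontrib.1, hcontrib.2⟩
  have hval := flowValue_eq_flowOut_sub_flowIn E w s t f hflow C hCcut
  have hinC : flowIn E f C = 0 := by
    refine Finset.sum_eq_zero fun e' he' => ?_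
    obtain ⟨hE, h1, h2⟩ := Finset.mem_filter.mp he'
    exact hin0 e' hE h1 h2
  have houtC : cutCap E w C - flowOut E f C = w e - f e := by
    rw [cutCap, flowOut, ← Finset.sum_sub_distrib]
    rw [Finset.sum_eq_single_of_mem e heC]
    intro e' he' hne
    obtain ⟨hE, hco⟩ := Finset.mem_filter.mp he'
    rw [hsat e' hE hne hco, sub_self]
  refine ⟨hCcut, hcontrib, fun C' hC' hco' => ?_⟩
  have hval' := flowValue_eq_flowOut_sub_flowIn E w s t f hflow C' hC'
  have heC' : e ∈ E.filter (fun e' => e'.1 ∈ C' ∧ e'.2 ∉ C') :=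
    Finset.mem_filter.mpr ⟨heE, hco'.1, hco'.2⟩
  have hin' : 0 ≤ flowIn E f C' :=
    Finset.sum_nonneg fun e' he' => hflow.nonneg e' (Finset.mem_filter.mp he').1
  have hout' : w e - f e ≤ cutCap E w C' - flowOut E f C' := by
    rw [cutCap, flowOut, ← Finset.sum_sub_distrib]
    refine Finset.single_le_sum (f := fun e' => w e' - f e') ?_ heC'
    intro e' he'
    have hE := (Finset.mem_filter.mp he').1
    exact sub_nonneg.mpr (hflow.le_cap e' hE)
  have heq : flowOut E f C - flowIn E f C = flowOut E f C' - flowIn E f C' := by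
    rw [← hval, ← hval']
  linarith
end

section
/- Let e be a vital edge and C(e) a mincut for e. Then every edge entering C(e) (tail outside C(e), head inside C(e)) is nonvital, i.e., removing such an edge does not decrease the minimum (s,t)-cut capacity. -/
open Finset

variable {V : Type*} [Fintype V] [DecidableEq V]

private lemma cutSetFinite (E : Finset (V × V)) (w : V × V → ℝ) (s t : V) :
    {x | ∃ C : Finset V, IsCut s t C ∧ cutCap E w C = x}.Finite := by
  have h : {x | ∃ C : Finset V, IsCut s t C ∧ cutCap E w C = x}
      ⊆ Set.range (cutCap E w) := by
    rintro x ⟨C, _, rfl⟩; exact ⟨C, rfl⟩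
  exact (Set.finite_range _).subset h

private lemma minCut_le (E : Finset (V × V)) (w : V × V → ℝ) (s t : V) (D : Finset V)
    (hD : IsCut s t D) : minCutCap E w s t ≤ cutCap E w D :=
  csInf_le (cutSetFinite E w s t).bddBelow ⟨D, hD, rfl⟩

private lemma minCut_attained (E : Finset (V × V)) (w : V × V → ℝ) {s t : V} (hst : s ≠ t) :
    ∃ D : Finset V, IsCut s t D ∧ cutCap E w D = minCutCap E w s t := by
  have hne : {x | ∃ C : Finset V, IsCut s t C ∧ cutCap E w C = x}.Nonempty :=
    ⟨cutCap E w {s}, {s}, ⟨Finset.mem_singleton_self s,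
      Finset.notMem_singleton.mpr hst.symm⟩, rfl⟩
  have hmem := hne.csInf_mem (cutSetFinite E w s t)
  obtain ⟨D, hD, hval⟩ := hmem
  exact ⟨D, hD, hval⟩

private lemma cutCap_erase_contrib (E : Finset (V × V)) (w : V × V → ℝ) (e : V × V)
    (D : Finset V) (he : e ∈ E) (hc : e.1 ∈ D ∧ e.2 ∉ D) :
    cutCap (E.erase e) w D = cutCap E w D - w e := by
  unfold cutCap
  rw [Finset.filter_erase, Finset.sum_erase_eq_sub (Finset.mem_filter.mpr ⟨he, hc⟩)]

private lemma cutCap_erase_noncontrib (E : Finset (V × V)) (w : V × V → ℝ) (e : V × V)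
    (D : Finset V) (hc : ¬(e.1 ∈ D ∧ e.2 ∉ D)) :
    cutCap (E.erase e) w D = cutCap E w D := by
  unfold cutCap
  have hnm : e ∉ E.filter (fun x => x.1 ∈ D ∧ x.2 ∉ D) :=
    fun h => hc (Finset.mem_filter.mp h).2
  rw [Finset.filter_erase, Finset.erase_eq_of_notMem hnm]

private lemma vital_exists (E : Finset (V × V)) (w : V × V → ℝ) {s t : V} (e : V × V)
    (hst : s ≠ t) (hvit : Vital E w s t e) :
    ∃ D : Finset V, IsCut s t D ∧ Contributes e D ∧
      cutCap E w D - w e < minCutCap E w s t := by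
  obtain ⟨he, hlt⟩ := hvit
  obtain ⟨D, hD, hval⟩ := minCut_attained (E.erase e) w hst
  by_cases hc : e.1 ∈ D ∧ e.2 ∉ D
  · refine ⟨D, hD, hc, ?_⟩
    rw [← cutCap_erase_contrib E w e D he hc, hval]; exact hlt
  · exfalso
    have h2 : cutCap E w D < minCutCap E w s t := by
      rw [← cutCap_erase_noncontrib E w e D hc, hval]; exact hlt
    exact absurd (minCut_le E w s t D hD) (not_le.mpr h2)

private lemma submod (E : Finset (V × V)) (w : V × V → ℝ) (C D : Finset V) :
    cutCap E w (C ∪ D) + cutCap E w (C ∩ D)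
      + ∑ x ∈ E.filter (fun x => x.1 ∈ C ∧ x.1 ∉ D ∧ x.2 ∈ D ∧ x.2 ∉ C), w x
      + ∑ x ∈ E.filter (fun x => x.1 ∈ D ∧ x.1 ∉ C ∧ x.2 ∈ C ∧ x.2 ∉ D), w x
    = cutCap E w C + cutCap E w D := by
  unfold cutCap
  simp only [Finset.sum_filter, ← Finset.sum_add_distrib]
  refine Finset.sum_congr rfl fun x _ => ?_
  by_cases h1 : x.1 ∈ C <;> by_cases h2 : x.1 ∈ D <;>
    by_cases h3 : x.2 ∈ C <;> by_cases h4 : x.2 ∈ D <;>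
    simp [h1, h2, h3, h4, Finset.mem_union, Finset.mem_inter]

/-- every edge entering a mincut for a vital edge is nonvital. -/
theorem incoming_edge_of_mincut_nonvital (E : Finset (V × V)) (w : V × V → ℝ) (s t : V)
    (hst : s ≠ t) (hpos : ∀ e ∈ E, 0 < w e) (e : V × V)
    (hvit : Vital E w s t e) (C : Finset V) (hC : IsMincutFor E w s t e C) :
    ∀ e' ∈ E, e'.1 ∉ C → e'.2 ∈ C → ¬ Vital E w s t e' := by
  intro e' he' hu hv hvit'
  obtain ⟨hCcut, hCe, hCmin⟩ := hC
  obtain ⟨D, hDcut, hDe', hDlt⟩ := vital_exists E w e' hst hvit'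
  obtain ⟨Ce1, Ce2⟩ := hCe
  have hCvlt : cutCap E w C - w e < minCutCap E w s t := by
    obtain ⟨X, hX, hXe, hXlt⟩ := vital_exists E w e hst hvit
    have := hCmin X hX hXe
    linarith
  have hUcut : IsCut s t (C ∪ D) :=
    ⟨Finset.mem_union_left _ hCcut.1, by
      simp [Finset.mem_union, hCcut.2, hDcut.2]⟩
  have hIcut : IsCut s t (C ∩ D) :=
    ⟨Finset.mem_inter.mpr ⟨hCcut.1, hDcut.1⟩,
      fun h => hCcut.2 (Finset.mem_inter.mp h).1⟩
  have hminU := minCut_le E w s t _ hUcut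
  have hminI := minCut_le E w s t _ hIcut
  have hsub := submod E w C D
  have hS2 : w e' ≤ ∑ x ∈ E.filter (fun x => x.1 ∈ D ∧ x.1 ∉ C ∧ x.2 ∈ C ∧ x.2 ∉ D), w x :=
    Finset.single_le_sum (fun i hi => le_of_lt (hpos i (Finset.mem_of_mem_filter i hi)))
      (Finset.mem_filter.mpr ⟨he', hDe'.1, hu, hv, hDe'.2⟩)
  have hS1 : (0:ℝ) ≤ ∑ x ∈ E.filter (fun x => x.1 ∈ C ∧ x.1 ∉ D ∧ x.2 ∈ D ∧ x.2 ∉ C), w x :=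
    Finset.sum_nonneg fun i hi => le_of_lt (hpos i (Finset.mem_of_mem_filter i hi))
  by_cases hD1 : e.1 ∈ D
  · have hle : cutCap E w C ≤ cutCap E w (C ∩ D) :=
      hCmin _ hIcut ⟨Finset.mem_inter.mpr ⟨Ce1, hD1⟩,
        fun h => Ce2 (Finset.mem_inter.mp h).1⟩
    linarith
  · by_cases hD2 : e.2 ∈ D
    · have hS1' : w e ≤
          ∑ x ∈ E.filter (fun x => x.1 ∈ C ∧ x.1 ∉ D ∧ x.2 ∈ D ∧ x.2 ∉ C), w x :=
        Finset.single_le_sum (fun i hi => le_of_lt (hpos i (Finset.mem_of_mem_filter i hi)))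
          (Finset.mem_filter.mpr ⟨hvit.1, Ce1, hD1, hD2, Ce2⟩)
      linarith
    · have hle : cutCap E w C ≤ cutCap E w (C ∪ D) :=
        hCmin _ hUcut ⟨Finset.mem_union_left _ Ce1, by
          simp [Finset.mem_union, Ce2, hD2]⟩
      linarith
end
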